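/- Let B be a finite set of monomials connected to 1 and Λ ∈ R* such that the matrices M_i representing multiplication by x_i modulo the span K of the border relations {x_i m − M_i(m) : m ∈ B, 1 ≤ i ≤ n} pairwise commute. Define Λ̃(p) = Λ(p(M)(1)), where p(M) is obtained by substituting x_i by M_i. Then Λ̃(bb') = Λ(bb') for all b, b' ∈ B. -/

import Mathlib

open MvPolynomial

/-- If the operators `M_i` on `⟨B⟩` (with `B` a monomial set connected to 1) pairwise
commute, send `m` to `x_i m` whenever `x_i m ∈ B`, and are compatible with `Λ`
(`Λ(x_i b'' b') = Λ(b'' M_i(b'))`), then the extension `Λ̃(p) = Λ(p(M)(1))` satisfies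
`Λ̃(b b') = Λ(b b')` for all `b, b' ∈ B`. -/
theorem extension_agrees_on_products (K : Type*) [Field K] (n r : ℕ)
    (b : Fin r → (Fin n →₀ ℕ))
    (hconn : ∀ j, b j = 0 ∨ ∃ (i : Fin n) (j' : Fin r), b j = Finsupp.single i 1 + b j')
    (V : Submodule K (MvPolynomial (Fin n) K))
    (hV : V = Submodule.span K
      (Set.range fun j => (monomial (b j) (1 : K) : MvPolynomial (Fin n) K)))
    (hone : (1 : MvPolynomial (Fin n) K) ∈ V)
    (hmem : ∀ j, (monomial (b j) (1 : K) : MvPolynomial (Fin n) K) ∈ V)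
    (M : Fin n → Module.End K ↥V)
    (hcomm : ∀ i i', Commute (M i) (M i'))
    (hMx : ∀ (i : Fin n) (j j' : Fin r), b j' = Finsupp.single i 1 + b j →
      M i ⟨monomial (b j) 1, hmem j⟩ = ⟨monomial (b j') 1, hmem j'⟩)
    (Λ : Module.Dual K (MvPolynomial (Fin n) K))
    (hcompat : ∀ (i : Fin n) (j j' : Fin r),
      Λ (X i * (monomial (b j) 1 * monomial (b j') 1))
        = Λ (monomial (b j) 1 *
            ((M i ⟨monomial (b j') 1, hmem j'⟩ : ↥V) : MvPolynomial (Fin n) K))) :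
    ∀ j j' : Fin r,
      Λ (((Finset.univ.noncommProd (fun i => M i ^ ((b j + b j') i))
            (fun i _ i' _ _ => (hcomm i i').pow_pow _ _)) ⟨1, hone⟩ :
          ↥V) : MvPolynomial (Fin n) K)
        = Λ (monomial (b j) 1 * monomial (b j') 1) := by
  classical
  -- the operator `p ↦ M^α`
  set φ : (Fin n →₀ ℕ) → Module.End K ↥V := fun α =>
    Finset.univ.noncommProd (fun i => M i ^ α i)
      (fun i _ i' _ _ => (hcomm i i').pow_pow _ _) with hφ
  have hφ_add : ∀ α β, φ (α + β) = φ α * φ β := by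
    intro α β
    have h1 : (fun i => M i ^ (α + β) i)
        = (fun i => M i ^ α i) * (fun i => M i ^ β i) := by
      funext i
      simp [Finsupp.add_apply, pow_add]
    rw [hφ]
    simp only [h1]
    exact Finset.noncommProd_mul_distrib _ _
      (fun i _ i' _ _ => (hcomm i i').pow_pow _ _)
      (fun i _ i' _ _ => (hcomm i i').pow_pow _ _)
      (fun i _ i' _ _ => (hcomm i i').pow_pow _ _)
  have hφ_zero : φ 0 = 1 := by
    rw [hφ]
    refine Finset.noncommProd_eq_pow_card _ _ _ 1 (fun i _ => by simp) |>.trans (one_pow _)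
  have hφ_single : ∀ i, φ (Finsupp.single i 1) = M i := by
    intro i
    show Finset.univ.noncommProd (fun i' => M i' ^ (Finsupp.single i 1) i')
      (fun x _ y _ _ => (hcomm x y).pow_pow _ _) = M i
    have h := Finset.mul_noncommProd_erase Finset.univ (Finset.mem_univ i)
      (fun i' => M i' ^ (Finsupp.single i 1) i') (fun x _ y _ _ => (hcomm x y).pow_pow _ _)
    have h2 := Finset.noncommProd_eq_pow_card (Finset.univ.erase i)
      (fun i' => M i' ^ (Finsupp.single i 1) i') (fun x _ y _ _ => (hcomm x y).pow_pow _ _) 1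
      (fun x hx => by
        have hxi : x ≠ i := (Finset.mem_erase.mp hx).1
        simp [Finsupp.single_apply, Ne.symm hxi])
    rw [← h]
    refine (congrArg (M i ^ (Finsupp.single i 1) i * ·) h2).trans ?_
    rw [one_pow, mul_one]
    simp
  -- degree function
  set deg : (Fin n →₀ ℕ) → ℕ := fun α => α.sum fun _ m => m with hdeg
  have hdeg_decomp : ∀ (i : Fin n) (α : Fin n →₀ ℕ),
      deg (Finsupp.single i 1 + α) = deg α + 1 := by
    intro i α
    rw [hdeg]
    simp [Finsupp.sum_add_index', add_comm]
  -- Lemma A : `M^{b j} 1 = b j`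
  have lemA : ∀ (d : ℕ) (j : Fin r), deg (b j) ≤ d →
      φ (b j) ⟨1, hone⟩ = ⟨monomial (b j) 1, hmem j⟩ := by
    intro d
    induction d with
    | zero =>
      intro j hj
      rcases hconn j with h0 | ⟨i, j', hji⟩
      · have h1 : φ (b j) = 1 := by rw [h0, hφ_zero]
        rw [h1]
        exact Subtype.ext (by simp [h0, MvPolynomial.monomial_zero'])
      · exfalso
        rw [hji, hdeg_decomp] at hj
        omega
    | succ d ih =>
      intro j hj
      rcases hconn j with h0 | ⟨i, j', hji⟩
      · have h1 : φ (b j) = 1 := by rw [h0, hφ_zero]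
        rw [h1]
        exact Subtype.ext (by simp [h0, MvPolynomial.monomial_zero'])
      · have hj' : deg (b j') ≤ d := by
          rw [hji, hdeg_decomp] at hj; omega
        have h1 : φ (b j) = M i * φ (b j') := by rw [hji, hφ_add, hφ_single]
        rw [h1]
        show M i (φ (b j') ⟨1, hone⟩) = _
        rw [ih j' hj']
        exact hMx i j' j hji
  -- Lemma B : `Λ (M^{b j} (b j')) = Λ (b j * b j')`
  have lemB : ∀ (d : ℕ) (j : Fin r), deg (b j) ≤ d → ∀ j' : Fin r,
      Λ ((φ (b j) ⟨monomial (b j') 1, hmem j'⟩ : ↥V) : MvPolynomial (Fin n) K)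
        = Λ (monomial (b j) 1 * monomial (b j') 1) := by
    intro d
    induction d with
    | zero =>
      intro j hj j'
      rcases hconn j with h0 | ⟨i, j'', hji⟩
      · have h1 : φ (b j) = 1 := by rw [h0, hφ_zero]
        rw [h1]
        simp [h0, MvPolynomial.monomial_zero']
      · exfalso
        rw [hji, hdeg_decomp] at hj
        omega
    | succ d ih =>
      intro j hj j'
      rcases hconn j with h0 | ⟨i, j'', hji⟩
      · have h1 : φ (b j) = 1 := by rw [h0, hφ_zero]
        rw [h1]
        simp [h0, MvPolynomial.monomial_zero']
      · have hj'' : deg (b j'') ≤ d := by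
          rw [hji, hdeg_decomp] at hj; omega
        -- two linear functionals on V agreeing on the spanning monomials
        have hspan : Submodule.span K
            (Set.range fun k => (⟨monomial (b k) 1, hmem k⟩ : ↥V)) = ⊤ := by
          refine Submodule.map_injective_of_injective V.injective_subtype ?_
          rw [Submodule.map_span, Submodule.map_top, Submodule.range_subtype]
          have himg : ((V.subtype) '' Set.range fun k => (⟨monomial (b k) 1, hmem k⟩ : ↥V))
              = Set.range fun j => (monomial (b j) (1 : K) : MvPolynomial (Fin n) K) := by
            ext x
            simp [Set.range_comp]
          rw [himg]
          exact hV.symm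
        have hFG : (Λ.comp (V.subtype.comp (φ (b j''))))
            = Λ.comp ((LinearMap.mulLeft K (monomial (b j'') (1:K))).comp V.subtype) := by
          apply LinearMap.ext_on hspan
          rintro x ⟨k, rfl⟩
          simpa using ih j'' hj'' k
        have key := LinearMap.congr_fun hFG (M i ⟨monomial (b j') 1, hmem j'⟩)
        simp only [LinearMap.comp_apply, LinearMap.mulLeft_apply, Submodule.coe_subtype] at key
        have hcomm' : Commute (M i) (φ (b j'')) :=
          Finset.noncommProd_commute _ _ _ _ (fun x _ => (hcomm i x).pow_right _)
        have h1 : φ (b j) = φ (b j'') * M i := by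
          rw [hji, hφ_add, hφ_single]; exact hcomm'.eq
        rw [h1]
        show Λ ((φ (b j'') (M i ⟨monomial (b j') 1, hmem j'⟩) : ↥V) : MvPolynomial (Fin n) K) = _
        rw [key, ← hcompat i j'' j']
        congr 1
        rw [← mul_assoc, MvPolynomial.X, MvPolynomial.monomial_mul, one_mul, ← hji]
  -- conclusion
  intro j j'
  have h1 : (Finset.univ.noncommProd (fun i => M i ^ ((b j + b j') i))
      (fun i _ i' _ _ => (hcomm i i').pow_pow _ _)) ⟨1, hone⟩
      = φ (b j) (φ (b j') ⟨1, hone⟩) := by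
    show φ (b j + b j') ⟨1, hone⟩ = _
    rw [hφ_add]
    rfl
  rw [h1, lemA (deg (b j')) j' le_rfl]
  exact lemB (deg (b j)) j le_rfl j'
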